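/- arXiv:2104.09382 — 2 statements merged into one kernel-verified Lean document; each statement's English description precedes it below -/
import Mathlib

section
/- Let N ≥ 2, t_i ≥ 0, r_i > 0, v, B > 0, and let w be a feasible allocation with w_i > 0 and Σ w_i ≤ 1. If at an allocation w the finishing times T_i(w) = t_i + v/(w_i B r_i) are not all equal, then w does not minimize T(w) = max_i T_i(w) subject to Σ w_i ≤ 1, w_i > 0; i.e., any minimizer equalizes all finishing times. -/
/-- if the finishing times T_i(w) = t_i + v/(w_i B r_i) are not
all equal at a feasible w, then w does not minimize the maximum finishing time:
some feasible w' achieves a strictly smaller maximum. -/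
theorem stmt_11 (N : ℕ) (hN : 2 ≤ N) (v B : ℝ) (r t : Fin N → ℝ)
    (hv : 0 < v) (hB : 0 < B) (hr : ∀ i, 0 < r i) (ht : ∀ i, 0 ≤ t i)
    (w : Fin N → ℝ) (hw : ∀ i, 0 < w i) (hsum : ∑ i, w i ≤ 1)
    (hne : ∃ i j, t i + v / (w i * B * r i) ≠ t j + v / (w j * B * r j)) :
    ∃ w' : Fin N → ℝ, (∀ i, 0 < w' i) ∧ (∑ i, w' i) ≤ 1 ∧
      Finset.univ.sup' (Finset.univ_nonempty_iff.mpr ⟨⟨0, by omega⟩⟩)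
          (fun i => t i + v / (w' i * B * r i)) <
      Finset.univ.sup' (Finset.univ_nonempty_iff.mpr ⟨⟨0, by omega⟩⟩)
          (fun i => t i + v / (w i * B * r i)) := by
  classical
  have hNe : (Finset.univ : Finset (Fin N)).Nonempty :=
    Finset.univ_nonempty_iff.mpr ⟨⟨0, by omega⟩⟩
  set T : Fin N → ℝ := fun i => t i + v / (w i * B * r i) with hTdef
  set M : ℝ := Finset.univ.sup' hNe T with hMdef
  have hle : ∀ i, T i ≤ M := fun i => Finset.le_sup' T (Finset.mem_univ i)
  obtain ⟨j, hjM⟩ : ∃ j, T j < M := by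
    obtain ⟨a, b, hab⟩ := hne
    by_contra h
    push_neg at h
    exact hab (((hle a).antisymm (h a)).trans ((hle b).antisymm (h b)).symm)
  set S : Finset (Fin N) := Finset.univ.filter (fun i => T i = M) with hSdef
  have hSne : S.Nonempty := by
    obtain ⟨i0, _, hi0⟩ := Finset.exists_mem_eq_sup' hNe T
    exact ⟨i0, by simp [hSdef, hi0.symm]; rfl⟩
  have hm : 0 < (S.card : ℝ) := by
    exact_mod_cast Finset.card_pos.mpr hSne
  have hden : ∀ i, 0 < w i * B * r i := fun i => mul_pos (mul_pos (hw i) hB) (hr i)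
  have hpos : ∀ i, 0 < v / (w i * B * r i) := fun i => div_pos hv (hden i)
  have htjM : t j < M := lt_of_le_of_lt (le_add_of_nonneg_right (hpos j).le) hjM
  set c : ℝ := v / ((M - t j) * B * r j) with hcdef
  have hMt : 0 < M - t j := by linarith
  have hcden : 0 < (M - t j) * B * r j := mul_pos (mul_pos hMt hB) (hr j)
  have hc : 0 < c := div_pos hv hcden
  have hcw : c < w j := by
    rw [hcdef, div_lt_iff₀ hcden]
    have h1 : v / (w j * B * r j) < M - t j := by
      have := hjM; simp only [hTdef] at this; linarith
    rw [div_lt_iff₀ (hden j)] at h1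
    nlinarith
  set ε : ℝ := (w j - c) / 2 with hεdef
  have hε : 0 < ε := by rw [hεdef]; linarith
  have hwjε : c < w j - ε := by rw [hεdef]; linarith
  set w' : Fin N → ℝ := fun i =>
    w i + ((if T i = M then ε / S.card else 0) + (if i = j then -ε else 0)) with hw'def
  have hjne : T j ≠ M := ne_of_lt hjM
  -- values of w'
  have hw'max : ∀ i, T i = M → w' i = w i + ε / S.card := by
    intro i hi
    have : i ≠ j := fun h => hjne (h ▸ hi)
    simp [hw'def, hi, this]
  have hw'j : w' j = w j - ε := by simp [hw'def, hjne]; ring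
  have hw'other : ∀ i, T i ≠ M → i ≠ j → w' i = w i := by
    intro i h1 h2; simp [hw'def, h1, h2]
  refine ⟨w', ?_, ?_, ?_⟩
  · intro i
    by_cases h1 : T i = M
    · rw [hw'max i h1]; have := div_pos hε hm; linarith [hw i]
    · by_cases h2 : i = j
      · subst h2; rw [hw'j]; linarith [hw i, hc]
      · rw [hw'other i h1 h2]; exact hw i
  · have hsum1 : ∑ i, (if T i = M then ε / (S.card : ℝ) else 0) = ε := by
      rw [← Finset.sum_filter, ← hSdef, Finset.sum_const, nsmul_eq_mul,
        mul_comm, div_mul_cancel₀ _ hm.ne']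
    have hsum2 : ∑ i : Fin N, (if i = j then -ε else 0) = -ε := by
      simp
    calc ∑ i, w' i = ∑ i, w i + (∑ i, (if T i = M then ε / (S.card : ℝ) else 0)
          + ∑ i : Fin N, (if i = j then -ε else 0)) := by
            simp [hw'def, Finset.sum_add_distrib]
      _ = ∑ i, w i := by rw [hsum1, hsum2]; ring
      _ ≤ 1 := hsum
  · rw [Finset.sup'_lt_iff]
    intro i _
    show t i + v / (w' i * B * r i) < M
    by_cases h1 : T i = M
    · rw [hw'max i h1]
      have hlt : v / ((w i + ε / S.card) * B * r i) < v / (w i * B * r i) := by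
        have hq : 0 < ε / (S.card : ℝ) := div_pos hε hm
        apply div_lt_div_of_pos_left hv (hden i)
        nlinarith [mul_pos (mul_pos hq hB) (hr i)]
      have hTi : t i + v / (w i * B * r i) = M := h1
      linarith
    · by_cases h2 : i = j
      · subst h2
        rw [hw'j]
        have hlt : v / ((w i - ε) * B * r i) < v / (c * B * r i) := by
          apply div_lt_div_of_pos_left hv (mul_pos (mul_pos hc hB) (hr i))
          nlinarith [hr i, hB]
        have heq : v / (c * B * r i) = M - t i := by
          rw [hcdef]; field_simp [hMt.ne', hB.ne', (hr i).ne']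
        linarith
      · rw [hw'other i h1 h2]
        exact lt_of_le_of_ne (hle i) h1
end

section
/- Let T* = inf{ T > max_i t_i : Σ_{i=1}^N v/(B r_i (T − t_i)) ≤ 1 }. Then T* is the minimum of max_i (t_i + v/(w_i B r_i)) over all w with w_i > 0 and Σ_i w_i ≤ 1. -/
/-- T* = inf{T > max_i t_i : Σ v/(B r_i (T − t_i)) ≤ 1} is the
minimum of max_i (t_i + v/(w_i B r_i)) over feasible bandwidth allocations. -/
theorem stmt_13 (N : ℕ) (hN : 0 < N) (v B : ℝ) (r t : Fin N → ℝ)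
    (hv : 0 < v) (hB : 0 < B) (hr : ∀ i, 0 < r i) (ht : ∀ i, 0 ≤ t i)
    (tmax : ℝ) (htmax : ∀ i, t i ≤ tmax) (hmem : ∃ i, t i = tmax)
    (Tstar : ℝ)
    (hTstar : Tstar =
      sInf {T : ℝ | tmax < T ∧ (∑ i, v / (B * r i * (T - t i))) ≤ 1}) :
    IsLeast {x : ℝ | ∃ w : Fin N → ℝ, (∀ i, 0 < w i) ∧ (∑ i, w i) ≤ 1 ∧
        x = Finset.univ.sup' (Finset.univ_nonempty_iff.mpr ⟨⟨0, hN⟩⟩)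
              (fun i => t i + v / (w i * B * r i))}
      Tstar := by
  obtain ⟨j, hj⟩ := hmem
  have hNE : (Finset.univ : Finset (Fin N)).Nonempty := ⟨j, Finset.mem_univ j⟩
  set δ : ℝ := v / (B * r j) with hδdef
  have hδ : 0 < δ := div_pos hv (mul_pos hB (hr j))
  set S : Set ℝ := {T : ℝ | tmax < T ∧ (∑ i, v / (B * r i * (T - t i))) ≤ 1} with hS
  -- S ⊆ Ici (tmax + δ)
  have hsub : S ⊆ Set.Ici (tmax + δ) := by
    intro T hT
    rcases hT with ⟨hT1, hT2⟩
    by_contra h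
    rw [Set.mem_Ici, not_le] at h
    have hpos : 0 < T - tmax := sub_pos.mpr hT1
    have hterm : 1 < v / (B * r j * (T - t j)) := by
      rw [hj, one_lt_div (mul_pos (mul_pos hB (hr j)) hpos)]
      have h2 : T - tmax < v / (B * r j) := by rw [← hδdef]; linarith
      have := (lt_div_iff₀ (mul_pos hB (hr j))).mp h2
      nlinarith
    have hle : v / (B * r j * (T - t j)) ≤ ∑ i, v / (B * r i * (T - t i)) := by
      apply Finset.single_le_sum (f := fun i => v / (B * r i * (T - t i)))
      · intro i _
        have hti : 0 < T - t i := by have := htmax i; linarith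
        exact div_nonneg hv.le (mul_pos (mul_pos hB (hr i)) hti).le
      · exact Finset.mem_univ j
    linarith
  -- S nonempty
  set C : ℝ := ∑ i, v / (B * r i) with hCdef
  have hC : 0 < C := Finset.sum_pos (fun i _ => div_pos hv (mul_pos hB (hr i))) hNE
  have hne : S.Nonempty := by
    refine ⟨tmax + C, ⟨by linarith, ?_⟩⟩
    · calc (∑ i, v / (B * r i * (tmax + C - t i)))
          ≤ ∑ i, v / (B * r i * C) := by
            apply Finset.sum_le_sum
            intro i _
            have hti : C ≤ tmax + C - t i := by have := htmax i; linarith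
            gcongr
            · exact mul_pos (mul_pos hB (hr i)) hC
            · nlinarith [mul_pos hB (hr i)]
        _ = (∑ i, v / (B * r i)) / C := by
            rw [Finset.sum_div]
            exact Finset.sum_congr rfl fun i _ => by rw [div_div]
        _ = 1 := div_self hC.ne'
  -- S is closed
  have hdenpos : ∀ (T : ℝ) (i : Fin N), 0 < B * r i * (max T (tmax + δ) - t i) := by
    intro T i
    have h1 : tmax + δ ≤ max T (tmax + δ) := le_max_right _ _
    have h2 : t i ≤ tmax := htmax i
    exact mul_pos (mul_pos hB (hr i)) (by linarith)
  set G : ℝ → ℝ := fun T => ∑ i, v / (B * r i * (max T (tmax + δ) - t i)) with hGdef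
  have hGF : ∀ T, tmax + δ ≤ T → G T = ∑ i, v / (B * r i * (T - t i)) := by
    intro T hT
    simp only [hGdef]
    exact Finset.sum_congr rfl fun i _ => by rw [max_eq_left hT]
  have hGcont : Continuous G := by
    apply continuous_finset_sum
    intro i _
    apply Continuous.div continuous_const
    · continuity
    · intro T
      exact (hdenpos T i).ne'
  have hSeq : S = Set.Ici (tmax + δ) ∩ G ⁻¹' Set.Iic 1 := by
    ext T
    constructor
    · intro hT
      have h1 := hsub hT
      rw [Set.mem_Ici] at h1
      exact ⟨h1, by rw [Set.mem_preimage, Set.mem_Iic, hGF T h1]; exact hT.2⟩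
    · rintro ⟨h1, h2⟩
      rw [Set.mem_Ici] at h1
      rw [Set.mem_preimage, Set.mem_Iic, hGF T h1] at h2
      exact ⟨by linarith, h2⟩
  have hSclosed : IsClosed S := by
    rw [hSeq]
    exact isClosed_Ici.inter (isClosed_Iic.preimage hGcont)
  have hbdd : BddBelow S := ⟨tmax + δ, fun T hT => hsub hT⟩
  have hTS : Tstar ∈ S := by
    rw [hTstar]
    exact hSclosed.csInf_mem hne hbdd
  have hTgt : ∀ i, 0 < Tstar - t i := by
    intro i
    have h1 := hsub hTS
    rw [Set.mem_Ici] at h1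
    have := htmax i
    linarith
  constructor
  · -- membership
    refine ⟨fun i => v / (B * r i * (Tstar - t i)), ?_, hTS.2, ?_⟩
    · intro i
      exact div_pos hv (mul_pos (mul_pos hB (hr i)) (hTgt i))
    · have heq : (fun i => t i + v / (v / (B * r i * (Tstar - t i)) * B * r i))
          = fun _ : Fin N => Tstar := by
        funext i
        have hd := hTgt i
        have hbr := mul_pos hB (hr i)
        have hX : 0 < v / (B * r i * (Tstar - t i)) * B * r i :=
          mul_pos (mul_pos (div_pos hv (mul_pos hbr hd)) hB) (hr i)
        have hkey : v / (v / (B * r i * (Tstar - t i)) * B * r i) = Tstar - t i := by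
          rw [div_eq_iff hX.ne']
          field_simp
          ring
          exact (mul_inv_cancel₀ (hr i).ne').symm
        rw [hkey]; ring
      rw [heq, Finset.sup'_const]
  · -- lower bound
    rintro x ⟨w, hw1, hw2, hx⟩
    rw [hTstar]
    apply csInf_le hbdd
    have hle : ∀ i, t i + v / (w i * B * r i) ≤ x := by
      intro i
      rw [hx]
      exact Finset.le_sup' (fun i => t i + v / (w i * B * r i)) (Finset.mem_univ i)
    have hterm : ∀ i, v / (B * r i * (x - t i)) ≤ w i := by
      intro i
      have hwi := hw1 i
      have hbr := mul_pos hB (hr i)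
      have h1 : v / (w i * B * r i) ≤ x - t i := by have := hle i; linarith
      have hq : 0 < v / (w i * B * r i) := div_pos hv (mul_pos (mul_pos hwi hB) (hr i))
      have h2 : v / w i ≤ B * r i * (x - t i) := by
        have h3 : v / w i / (B * r i) ≤ x - t i := by
          rw [div_div, ← mul_assoc]
          exact h1
        have := (div_le_iff₀ hbr).mp h3
        linarith
      calc v / (B * r i * (x - t i)) ≤ v / (v / w i) := by
            gcongr
        _ = w i := by
            rw [div_div_eq_mul_div, mul_comm, mul_div_assoc, div_self hv.ne', mul_one]
    have hxgt : tmax < x := by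
      have := hle j
      have hq : 0 < v / (w j * B * r j) := div_pos hv (mul_pos (mul_pos (hw1 j) hB) (hr j))
      rw [hj] at this
      linarith
    refine ⟨hxgt, ?_⟩
    calc (∑ i, v / (B * r i * (x - t i))) ≤ ∑ i, w i :=
          Finset.sum_le_sum fun i _ => hterm i
      _ ≤ 1 := hw2
end
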